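/- Let r ↦ q^U(rℓ) be absolutely continuous with q^U(r_2 ℓ) - q^U(r_1 ℓ) = 2∫_{r_1}^{r_2} q^L(vℓ)/v dv for 0 < r_1 < r_2, where q^U(ξ) = ∫ ((ξ·h)^2 ∧ 1) μ(dh) and q^L(ξ) = ∫_{0<|ξ·h|≤1} (ξ·h)^2 μ(dh) for a Lévy measure μ on ℝ^n\{0} and unit vector ℓ. -/

import Mathlib

open MeasureTheory Set

lemma indIntegrable (a c x y : ℝ) :
    IntervalIntegrable ((Icc (-c) c).indicator fun v => 2 * v * a ^ 2) volume x y := by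
  rw [intervalIntegrable_iff]
  have : IntervalIntegrable (fun v : ℝ => 2 * v * a ^ 2) volume x y :=
    ((continuous_const.mul continuous_id).mul continuous_const).intervalIntegrable x y
  rw [intervalIntegrable_iff] at this
  exact this.indicator measurableSet_Icc

lemma ptA (a : ℝ) {r₁ r₂ : ℝ} (h1 : 0 < r₁) (h12 : r₁ ≤ r₂) :
    min ((r₂ * a) ^ 2) 1 - min ((r₁ * a) ^ 2) 1
      = ∫ v in r₁..r₂, (if |v * a| ≤ 1 ∧ a ≠ 0 then 2 * v * a ^ 2 else 0) := by
  by_cases ha : a = 0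
  · simp [ha]
  · set c := 1 / |a| with hc
    have hap : 0 < |a| := abs_pos.mpr ha
    have hcpos : 0 < c := by positivity
    have hca : c * |a| = 1 := by rw [hc]; field_simp
    have hfun : (fun v => if |v * a| ≤ 1 ∧ a ≠ 0 then 2 * v * a ^ 2 else 0)
        = (Icc (-c) c).indicator fun v => 2 * v * a ^ 2 := by
      funext v
      by_cases hv : |v| ≤ c
      · have h1' : |v * a| ≤ 1 := by
          rw [abs_mul]
          calc |v| * |a| ≤ c * |a| := by gcongr
            _ = 1 := hca
        rw [if_pos ⟨h1', ha⟩, indicator_of_mem (Set.mem_Icc.mpr (abs_le.mp hv)) _]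
      · have h1' : ¬ |v * a| ≤ 1 := by
          rw [abs_mul]; push_neg at hv ⊢
          calc 1 = c * |a| := hca.symm
            _ < |v| * |a| := by gcongr
        rw [if_neg (fun hcon => h1' hcon.1),
          indicator_of_notMem (fun hmem => hv (abs_le.mpr (Set.mem_Icc.mp hmem))) _]
    rw [hfun]
    have key : ∀ x y : ℝ, -c ≤ x → x ≤ y → y ≤ c →
        (∫ v in x..y, (Icc (-c) c).indicator (fun v => 2 * v * a ^ 2) v)
          = a ^ 2 * y ^ 2 - a ^ 2 * x ^ 2 := by
      intro x y hx hxy hy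
      have hEq : EqOn ((Icc (-c) c).indicator fun v => 2 * v * a ^ 2)
          (fun v => 2 * v * a ^ 2) (Set.uIcc x y) := by
        intro v hv
        rw [Set.uIcc_of_le hxy] at hv
        exact indicator_of_mem (Set.mem_Icc.mpr ⟨le_trans hx hv.1, le_trans hv.2 hy⟩) _
      rw [intervalIntegral.integral_congr hEq]
      have : (fun v : ℝ => 2 * v * a ^ 2) = fun v : ℝ => (2 * a ^ 2) * v := by
        funext v; ring
      rw [this, intervalIntegral.integral_const_mul, integral_id]
      ring
    have zero : ∀ x y : ℝ, c ≤ x → x ≤ y →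
        (∫ v in x..y, (Icc (-c) c).indicator (fun v => 2 * v * a ^ 2) v) = 0 := by
      intro x y hcx hxy
      rw [intervalIntegral.integral_of_le hxy]
      have hEq : EqOn ((Icc (-c) c).indicator fun v => 2 * v * a ^ 2)
          (fun _ => (0:ℝ)) (Ioc x y) := fun v hv =>
        indicator_of_notMem (fun hmem => by
          have := (Set.mem_Icc.mp hmem).2
          have := hv.1
          linarith) _
      rw [setIntegral_congr_fun measurableSet_Ioc hEq, integral_zero]
    have hminlt : ∀ r : ℝ, 0 < r → r ≤ c → min ((r * a) ^ 2) 1 = (r * a) ^ 2 := by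
      intro r hr hrc
      apply min_eq_left
      have : |r * a| ≤ 1 := by
        rw [abs_mul, abs_of_pos hr]
        calc r * |a| ≤ c * |a| := by gcongr
          _ = 1 := hca
      calc (r * a) ^ 2 = |r * a| ^ 2 := (sq_abs _).symm
        _ ≤ 1 := pow_le_one₀ (abs_nonneg _) this
    have hminge : ∀ r : ℝ, c ≤ r → min ((r * a) ^ 2) 1 = 1 := by
      intro r hrc
      apply min_eq_right
      have h1r : 1 ≤ |r * a| := by
        rw [abs_mul, abs_of_pos (lt_of_lt_of_le hcpos hrc)]
        calc 1 = c * |a| := hca.symm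
          _ ≤ r * |a| := by gcongr
      calc (1:ℝ) = 1 ^ 2 := by ring
        _ ≤ |r * a| ^ 2 := by gcongr
        _ = (r * a) ^ 2 := sq_abs _
    rcases le_or_gt r₂ c with h2c | hc2
    · rw [key r₁ r₂ (by linarith) h12 h2c, hminlt r₁ h1 (le_trans h12 h2c),
        hminlt r₂ (lt_of_lt_of_le h1 h12) h2c]
      ring
    · rcases le_or_gt c r₁ with hc1 | h1c
      · rw [zero r₁ r₂ hc1 h12, hminge r₁ hc1, hminge r₂ (by linarith)]
        ring
      · rw [← intervalIntegral.integral_add_adjacent_intervals (b := c)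
            (indIntegrable a c r₁ c) (indIntegrable a c c r₂),
          key r₁ c (by linarith) h1c.le le_rfl, zero c r₂ le_rfl hc2.le,
          hminlt r₁ h1 h1c.le, hminge r₂ hc2.le]
        have hc2' : a ^ 2 * c ^ 2 = 1 := by
          calc a ^ 2 * c ^ 2 = (c * |a|) ^ 2 := by rw [mul_pow, sq_abs]; ring
            _ = 1 := by rw [hca]; ring
        nlinarith [hc2']

theorem stmt11 {n : ℕ} (μ : Measure (EuclideanSpace ℝ (Fin n)))
    (hμ0 : μ {0} = 0)
    (hμ : ∫⁻ h, ENNReal.ofReal (min 1 (‖h‖ ^ 2)) ∂μ < ⊤)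
    (ℓ : EuclideanSpace ℝ (Fin n)) (hℓ : ‖ℓ‖ = 1) :
    ∀ r₁ r₂ : ℝ, 0 < r₁ → r₁ < r₂ →
      (∫ h, min ((inner ℝ (r₂ • ℓ) h : ℝ) ^ 2) 1 ∂μ)
          - (∫ h, min ((inner ℝ (r₁ • ℓ) h : ℝ) ^ 2) 1 ∂μ)
        = 2 * ∫ v in r₁..r₂,
            (∫ h in {h | 0 < |(inner ℝ (v • ℓ) h : ℝ)| ∧ |(inner ℝ (v • ℓ) h : ℝ)| ≤ 1},
              (inner ℝ (v • ℓ) h : ℝ) ^ 2 ∂μ) / v := by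
  intro r₁ r₂ hr₁ hr₁₂
  set a : EuclideanSpace ℝ (Fin n) → ℝ := fun h => inner ℝ ℓ h with ha
  have hacont : Continuous a := Continuous.inner continuous_const continuous_id
  have habs : ∀ h, |a h| ≤ ‖h‖ := fun h => by
    simpa [hℓ] using abs_real_inner_le_norm ℓ h
  have hasq : ∀ h, (a h) ^ 2 ≤ ‖h‖ ^ 2 := fun h => by
    rw [← sq_abs]; exact pow_le_pow_left₀ (abs_nonneg _) (habs h) 2
  -- base integrability
  have hμint : Integrable (fun h => min 1 (‖h‖ ^ 2)) μ := by
    refine ⟨(continuous_const.min ((continuous_norm).pow 2)).aestronglyMeasurable, ?_⟩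
    rw [hasFiniteIntegral_iff_ofReal (Filter.Eventually.of_forall fun h => by positivity)]
    exact hμ
  have hI : ∀ r : ℝ, Integrable (fun h => min ((r * a h) ^ 2) 1) μ := by
    intro r
    refine (hμint.const_mul (max (r ^ 2) 1)).mono'
      (((continuous_const.mul hacont).pow 2).min continuous_const).aestronglyMeasurable
      (Filter.Eventually.of_forall fun h => ?_)
    rw [Real.norm_eq_abs, abs_of_nonneg (le_min (by positivity) zero_le_one)]
    rcases le_or_gt (‖h‖ ^ 2) 1 with hh | hh
    · calc min ((r * a h) ^ 2) 1 ≤ (r * a h) ^ 2 := min_le_left _ _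
        _ = r ^ 2 * (a h) ^ 2 := by ring
        _ ≤ r ^ 2 * ‖h‖ ^ 2 := mul_le_mul_of_nonneg_left (hasq h) (sq_nonneg r)
        _ ≤ max (r ^ 2) 1 * ‖h‖ ^ 2 := mul_le_mul_of_nonneg_right (le_max_left _ _) (sq_nonneg _)
        _ = max (r ^ 2) 1 * min 1 (‖h‖ ^ 2) := by rw [min_eq_right hh]
    · calc min ((r * a h) ^ 2) 1 ≤ 1 := min_le_right _ _
        _ ≤ max (r ^ 2) 1 * 1 := by have := le_max_right (r ^ 2) (1:ℝ); nlinarith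
        _ = max (r ^ 2) 1 * min 1 (‖h‖ ^ 2) := by rw [min_eq_left hh.le]
  -- sigma-finiteness of μ
  have hfin : ∀ ε : ℝ, 0 < ε → μ {h | ε ≤ ‖h‖} < ⊤ := by
    intro ε hε
    set s : Set (EuclideanSpace ℝ (Fin n)) := {h | ε ≤ ‖h‖} with hs
    have hsm : MeasurableSet s := (isClosed_le continuous_const continuous_norm).measurableSet
    have hb : ENNReal.ofReal (min 1 (ε ^ 2)) * μ s
        ≤ ∫⁻ h, ENNReal.ofReal (min 1 (‖h‖ ^ 2)) ∂μ := by
      calc ENNReal.ofReal (min 1 (ε ^ 2)) * μ s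
          = ∫⁻ _ in s, ENNReal.ofReal (min 1 (ε ^ 2)) ∂μ := (setLIntegral_const s _).symm
        _ ≤ ∫⁻ h in s, ENNReal.ofReal (min 1 (‖h‖ ^ 2)) ∂μ := by
            refine setLIntegral_mono (by fun_prop) fun h hh => ?_
            exact ENNReal.ofReal_le_ofReal (by
              have : ε ^ 2 ≤ ‖h‖ ^ 2 := by gcongr; exact hh
              exact min_le_min le_rfl this)
        _ ≤ ∫⁻ h, ENNReal.ofReal (min 1 (‖h‖ ^ 2)) ∂μ := setLIntegral_le_lintegral _ _
    by_contra htop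
    rw [not_lt, top_le_iff] at htop
    rw [htop, ENNReal.mul_top (by
      simp only [ne_eq, ENNReal.ofReal_eq_zero, not_le]
      positivity)] at hb
    exact (lt_irrefl ⊤ (lt_of_le_of_lt (top_le_iff.mpr (top_le_iff.mp hb)) hμ)).elim
  haveI hσ : SigmaFinite μ := by
    apply Measure.sigmaFinite_of_countable
      (S := range (fun k : ℕ => ({0} : Set (EuclideanSpace ℝ (Fin n)))
        ∪ {h | 1 / (k + 1) ≤ ‖h‖})) (countable_range _)
    · rintro s ⟨k, rfl⟩
      calc μ _ ≤ μ {0} + μ {h | 1 / (k + 1 : ℝ) ≤ ‖h‖} := measure_union_le _ _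
        _ < ⊤ := by rw [hμ0, zero_add]; exact hfin _ (by positivity)
    · rw [sUnion_range]
      ext h
      simp only [mem_iUnion, mem_union, mem_singleton_iff, mem_setOf_eq, mem_univ, iff_true]
      by_cases h0 : h = 0
      · exact ⟨0, Or.inl h0⟩
      · have hn : 0 < ‖h‖ := norm_pos_iff.mpr h0
        obtain ⟨k, hk⟩ := exists_nat_one_div_lt hn
        exact ⟨k, Or.inr hk.le⟩
  -- the density function
  set G : EuclideanSpace ℝ (Fin n) → ℝ → ℝ :=
    fun h v => if |v * a h| ≤ 1 ∧ a h ≠ 0 then 2 * v * (a h) ^ 2 else 0 with hG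
  set ν : Measure ℝ := volume.restrict (Ioc r₁ r₂) with hν
  have hGmeas : Measurable (Function.uncurry G) := by
    have hm1 : Measurable fun p : EuclideanSpace ℝ (Fin n) × ℝ => p.2 * a p.1 :=
      measurable_snd.mul (hacont.measurable.comp measurable_fst)
    refine Measurable.ite ?_ (by fun_prop) measurable_const
    exact MeasurableSet.inter (measurableSet_le hm1.abs measurable_const)
      (((hacont.measurable.comp measurable_fst) (measurableSet_singleton 0)).compl)
  have hνfin : ν univ < ⊤ := by
    rw [hν, Measure.restrict_apply_univ]; exact measure_Ioc_lt_top
  have hone : Integrable (fun _ : ℝ => (1:ℝ)) ν :=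
    integrable_const_iff.mpr (Or.inr ⟨hνfin⟩)
  have hae : ∀ᵐ p : EuclideanSpace ℝ (Fin n) × ℝ ∂(μ.prod ν), p.2 ∈ Ioc r₁ r₂ := by
    rw [ae_iff]
    have hset : {p : EuclideanSpace ℝ (Fin n) × ℝ | ¬ p.2 ∈ Ioc r₁ r₂}
        = univ ×ˢ (Ioc r₁ r₂)ᶜ := by ext p; simp
    rw [hset, Measure.prod_prod, hν, Measure.restrict_apply measurableSet_Ioc.compl,
      compl_inter_self, measure_empty, mul_zero]
  have hGint : Integrable (Function.uncurry G) (μ.prod ν) := by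
    set C : ℝ := 2 * r₂ * max 1 (1 / r₁ ^ 2) with hC
    have hCpos : 0 < C := by
      have : (0:ℝ) < max 1 (1 / r₁ ^ 2) := lt_of_lt_of_le one_pos (le_max_left _ _)
      have : (0:ℝ) < r₂ := lt_trans hr₁ hr₁₂
      positivity
    have hbound : Integrable
        (fun p : EuclideanSpace ℝ (Fin n) × ℝ => (C * min 1 (‖p.1‖ ^ 2)) * 1) (μ.prod ν) :=
      (hμint.const_mul C).mul_prod hone
    refine hbound.mono' hGmeas.aestronglyMeasurable ?_
    filter_upwards [hae] with p hp
    obtain ⟨h, v⟩ := p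
    simp only [Function.uncurry_apply_pair]
    rw [Real.norm_eq_abs, mul_one]
    have hv1 : r₁ < v := hp.1
    have hv2 : v ≤ r₂ := hp.2
    have hv0 : 0 < v := lt_trans hr₁ hv1
    by_cases hcond : |v * a h| ≤ 1 ∧ a h ≠ 0
    · rw [hG]
      simp only [if_pos hcond]
      rw [abs_of_nonneg (by positivity)]
      have hkey : (a h) ^ 2 ≤ max 1 (1 / r₁ ^ 2) * min 1 ((a h) ^ 2) := by
        rcases le_or_gt ((a h) ^ 2) 1 with h1 | h1
        · rw [min_eq_right h1]
          exact le_mul_of_one_le_left (sq_nonneg _) (le_max_left _ _)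
        · rw [min_eq_left h1.le, mul_one]
          have habs1 : |a h| ≤ 1 / v := by
            rw [le_div_iff₀ hv0, mul_comm]
            calc v * |a h| = |v * a h| := by rw [abs_mul, abs_of_pos hv0]
              _ ≤ 1 := hcond.1
          have : (a h) ^ 2 ≤ 1 / v ^ 2 := by
            rw [← sq_abs]
            calc |a h| ^ 2 ≤ (1 / v) ^ 2 := pow_le_pow_left₀ (abs_nonneg _) habs1 2
              _ = 1 / v ^ 2 := by rw [div_pow, one_pow]
          calc (a h) ^ 2 ≤ 1 / v ^ 2 := this
            _ ≤ 1 / r₁ ^ 2 := by gcongr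
            _ ≤ max 1 (1 / r₁ ^ 2) := le_max_right _ _
      have hmin : min 1 ((a h) ^ 2) ≤ min 1 (‖h‖ ^ 2) := min_le_min le_rfl (hasq h)
      have hr₂0 : (0:ℝ) ≤ r₂ := (lt_trans hr₁ hr₁₂).le
      have h3 : max 1 (1 / r₁ ^ 2) * min 1 ((a h) ^ 2)
          ≤ max 1 (1 / r₁ ^ 2) * min 1 (‖h‖ ^ 2) :=
        mul_le_mul_of_nonneg_left hmin (le_trans zero_le_one (le_max_left _ _))
      have h4 : v * (a h) ^ 2 ≤ r₂ * (max 1 (1 / r₁ ^ 2) * min 1 (‖h‖ ^ 2)) :=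
        mul_le_mul hv2 (hkey.trans h3) (sq_nonneg _) hr₂0
      calc 2 * v * (a h) ^ 2 = 2 * (v * (a h) ^ 2) := by ring
        _ ≤ 2 * (r₂ * (max 1 (1 / r₁ ^ 2) * min 1 (‖h‖ ^ 2))) := by linarith
        _ = C * min 1 (‖h‖ ^ 2) := by rw [hC]; ring
    · rw [hG]
      simp only [if_neg hcond, abs_zero]
      have : (0:ℝ) ≤ min 1 (‖h‖ ^ 2) := le_min zero_le_one (sq_nonneg _)
      positivity
  -- main computation
  simp_rw [real_inner_smul_left]
  have hSmeas : ∀ v : ℝ, MeasurableSet {h | 0 < |v * a h| ∧ |v * a h| ≤ 1} := by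
    intro v
    have hm : Measurable fun h => |v * a h| := ((continuous_const.mul hacont).abs).measurable
    exact (measurableSet_lt measurable_const hm).inter (measurableSet_le hm measurable_const)
  calc (∫ h, min ((r₂ * a h) ^ 2) 1 ∂μ) - ∫ h, min ((r₁ * a h) ^ 2) 1 ∂μ
      = ∫ h, (min ((r₂ * a h) ^ 2) 1 - min ((r₁ * a h) ^ 2) 1) ∂μ :=
        (integral_sub (hI r₂) (hI r₁)).symm
    _ = ∫ h, ∫ v, G h v ∂ν ∂μ := by
        refine integral_congr_ae (Filter.Eventually.of_forall fun h => ?_)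
        show min ((r₂ * a h) ^ 2) 1 - min ((r₁ * a h) ^ 2) 1
          = ∫ v in Ioc r₁ r₂, G h v ∂volume
        rw [← intervalIntegral.integral_of_le hr₁₂.le]
        exact ptA (a h) hr₁ hr₁₂.le
    _ = ∫ v, ∫ h, G h v ∂μ ∂ν := integral_integral_swap hGint
    _ = ∫ v, (2 * ((∫ h in {h | 0 < |v * a h| ∧ |v * a h| ≤ 1}, (v * a h) ^ 2 ∂μ) / v)) ∂ν := by
        rw [hν]
        refine setIntegral_congr_fun measurableSet_Ioc fun v hv => ?_
        have hv0 : 0 < v := lt_trans hr₁ hv.1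
        have hSeq : {h | 0 < |v * a h| ∧ |v * a h| ≤ 1}
            = {h | |v * a h| ≤ 1 ∧ a h ≠ 0} := by
          ext h
          simp only [mem_setOf_eq, abs_pos]
          constructor
          · rintro ⟨h1, h2⟩
            exact ⟨h2, fun h0 => h1 (by rw [h0, mul_zero])⟩
          · rintro ⟨h1, h2⟩
            exact ⟨mul_ne_zero hv0.ne' h2, h1⟩
        rw [hSeq, ← integral_indicator (hSeq ▸ hSmeas v)]
        have h2 : 2 * ((∫ h, ({h | |v * a h| ≤ 1 ∧ a h ≠ 0}).indicator
            (fun h => (v * a h) ^ 2) h ∂μ) / v)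
            = ∫ h, (2 / v) * ({h | |v * a h| ≤ 1 ∧ a h ≠ 0}).indicator
              (fun h => (v * a h) ^ 2) h ∂μ := by
          rw [integral_const_mul]; ring
        rw [h2]
        refine integral_congr_ae (Filter.Eventually.of_forall fun h => ?_)
        by_cases hc : |v * a h| ≤ 1 ∧ a h ≠ 0
        · rw [hG]
          simp only [if_pos hc, indicator_of_mem
            (show h ∈ {h | |v * a h| ≤ 1 ∧ a h ≠ 0} from hc)]
          field_simp
        · rw [hG]
          simp only [if_neg hc, indicator_of_notMem
            (show h ∉ {h | |v * a h| ≤ 1 ∧ a h ≠ 0} from hc), mul_zero]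
    _ = 2 * ∫ v in r₁..r₂,
          (∫ h in {h | 0 < |v * a h| ∧ |v * a h| ≤ 1}, (v * a h) ^ 2 ∂μ) / v := by
        rw [intervalIntegral.integral_of_le hr₁₂.le, ← hν, ← integral_const_mul]
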